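/- Let S_N = { Σ_{i=1}^{n} Π_{j=1}^{N} T_{i,j} : T_{i,j} ∈ To_d(1), n ∈ N } be the set of sums of products of N tridiagonal Toeplitz matrices. If n + m ≤ d - 1, then E_{n,m} ∈ S_{d-1}. -/

import Mathlib

/-- `E_{n,m}` (1-based positions): 1 in position `(n, m)`, zeros elsewhere. -/
def matUnit (d : ℕ) (n m : ℤ) : Matrix (Fin d) (Fin d) ℝ :=
  Matrix.of fun i j => if (i : ℤ) + 1 = n ∧ (j : ℤ) + 1 = m then 1 else 0

/-- `To_d(1)`: tridiagonal Toeplitz matrices, `x_{ij} = w_{j-i}` for `|i-j| ≤ 1`, else `0`. -/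
def Tod1 (d : ℕ) : Set (Matrix (Fin d) (Fin d) ℝ) :=
  {A | ∃ w : ℤ → ℝ, ∀ i j : Fin d,
    A i j = if |(i : ℤ) - (j : ℤ)| ≤ 1 then w ((j : ℤ) - (i : ℤ)) else 0}

/-- `S_N`: finite sums of (ordered) products of `N` tridiagonal Toeplitz matrices. -/
def SN (d N : ℕ) : Set (Matrix (Fin d) (Fin d) ℝ) :=
  {A | ∃ n : ℕ, ∃ T : Fin n → Fin N → Matrix (Fin d) (Fin d) ℝ,
    (∀ i j, T i j ∈ Tod1 d) ∧ A = ∑ i, (List.ofFn (T i)).prod}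

open Matrix

namespace Aux

/-- the subdiagonal shift matrix -/
def Lm (d : ℕ) : Matrix (Fin d) (Fin d) ℝ :=
  Matrix.of fun i j => if (i : ℤ) = (j : ℤ) + 1 then 1 else 0

/-- the superdiagonal shift matrix -/
def Um (d : ℕ) : Matrix (Fin d) (Fin d) ℝ :=
  Matrix.of fun i j => if (j : ℤ) = (i : ℤ) + 1 then 1 else 0

variable {d : ℕ}

lemma sum_indicator (c : ℤ) (x : ℝ) :
    (∑ k : Fin d, if (k : ℤ) = c then x else 0) = if 0 ≤ c ∧ c < d then x else 0 := by
  split_ifs with h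
  · have hc : c.toNat < d := by omega
    rw [Finset.sum_eq_single (⟨c.toNat, hc⟩ : Fin d)]
    · rw [if_pos (by simp only [Fin.val_mk]; omega)]
    · intro b _ hb
      rw [if_neg]
      intro hbc
      exact hb (Fin.ext (show _ = c.toNat by omega))
    · simp
  · apply Finset.sum_eq_zero
    intro k _
    rw [if_neg]
    have := k.isLt
    omega

lemma Lm_pow (a : ℕ) (i j : Fin d) :
    (Lm d ^ a) i j = if (i : ℤ) = (j : ℤ) + a then 1 else 0 := by
  induction a generalizing i j with
  | zero =>
    simp only [pow_zero, Matrix.one_apply, Nat.cast_zero, add_zero, Fin.ext_iff]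
    split_ifs
    all_goals try rfl
    all_goals (exfalso; omega)
  | succ a ih =>
    rw [pow_succ, Matrix.mul_apply]
    have key : ∀ k : Fin d, (Lm d ^ a) i k * Lm d k j
        = if (k : ℤ) = (j : ℤ) + 1 then (if (i : ℤ) = (j : ℤ) + 1 + a then (1:ℝ) else 0) else 0 := by
      intro k
      rw [ih]
      simp only [Lm, Matrix.of_apply]
      split_ifs
      all_goals try ring
      all_goals (exfalso; omega)
    rw [Finset.sum_congr rfl fun k _ => key k, sum_indicator]
    have := i.isLt
    have := j.isLt
    push_cast
    split_ifs
    all_goals try rfl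
    all_goals (exfalso; omega)

lemma Um_eq : Um d = (Lm d)ᵀ := by
  ext i j
  simp [Um, Lm, Matrix.transpose_apply]

lemma Um_pow (b : ℕ) (i j : Fin d) :
    (Um d ^ b) i j = if (j : ℤ) = (i : ℤ) + b then 1 else 0 := by
  have h : Um d ^ b = (Lm d ^ b)ᵀ := by rw [Um_eq, Matrix.transpose_pow]
  rw [h, Matrix.transpose_apply, Lm_pow]

lemma LU_pow (a b : ℕ) (i j : Fin d) :
    (Lm d ^ a * Um d ^ b) i j
      = if ((i : ℤ) - a = (j : ℤ) - b ∧ (a : ℤ) ≤ i) then 1 else 0 := by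
  rw [Matrix.mul_apply]
  have key : ∀ k : Fin d, (Lm d ^ a) i k * (Um d ^ b) k j
      = if (k : ℤ) = (i : ℤ) - a then (if (i : ℤ) - a = (j : ℤ) - b then (1:ℝ) else 0) else 0 := by
    intro k
    rw [Lm_pow, Um_pow]
    split_ifs
    all_goals try ring
    all_goals (exfalso; omega)
  rw [Finset.sum_congr rfl fun k _ => key k, sum_indicator]
  have := i.isLt
  split_ifs
  all_goals try rfl
  all_goals (exfalso; omega)

lemma Lm_mem : Lm d ∈ Tod1 d := by
  refine ⟨fun z => if z = -1 then 1 else 0, fun i j => ?_⟩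
  simp only [Lm, Matrix.of_apply, abs_le]
  split_ifs
  all_goals try rfl
  all_goals (exfalso; omega)

lemma Um_mem : Um d ∈ Tod1 d := by
  refine ⟨fun z => if z = 1 then 1 else 0, fun i j => ?_⟩
  simp only [Um, Matrix.of_apply, abs_le]
  split_ifs
  all_goals try rfl
  all_goals (exfalso; omega)

lemma neg_Lm_mem : -Lm d ∈ Tod1 d := by
  refine ⟨fun z => if z = -1 then -1 else 0, fun i j => ?_⟩
  simp only [Lm, Matrix.neg_apply, Matrix.of_apply, abs_le]
  split_ifs
  all_goals try norm_num
  all_goals (exfalso; omega)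

lemma one_mem : (1 : Matrix (Fin d) (Fin d) ℝ) ∈ Tod1 d := by
  refine ⟨fun z => if z = 0 then 1 else 0, fun i j => ?_⟩
  simp only [Matrix.one_apply, abs_le, Fin.ext_iff]
  split_ifs
  all_goals try rfl
  all_goals (exfalso; omega)

lemma ofFn_cast {α : Type*} (l : List α) {N : ℕ} (h : l.length = N) :
    List.ofFn (fun j : Fin N => l.get (Fin.cast h.symm j)) = l := by
  subst h
  simp [List.ofFn_get]

end Aux

/-- If `1 ≤ n, m` and `n + m ≤ d - 1`, then `E_{n,m} ∈ S_{d-1}`. -/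
theorem matUnit_mem_SN_of_add_le (d n m : ℕ) (hn : 1 ≤ n) (hm : 1 ≤ m)
    (hnm : n + m ≤ d - 1) : matUnit d n m ∈ SN d (d - 1) := by
  classical
  have hd : 3 ≤ d := by omega
  let l1 : List (Matrix (Fin d) (Fin d) ℝ) :=
    List.replicate (n-1) (Aux.Lm d) ++ List.replicate (m-1) (Aux.Um d) ++ List.replicate (d+1-n-m) 1
  let l2 : List (Matrix (Fin d) (Fin d) ℝ) :=
    (-(Aux.Lm d)) :: (List.replicate (n-1) (Aux.Lm d) ++ List.replicate m (Aux.Um d) ++ List.replicate (d-1-n-m) 1)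
  have h1 : l1.length = d - 1 := by
    simp only [l1, List.length_append, List.length_replicate]
    omega
  have h2 : l2.length = d - 1 := by
    simp only [l2, List.length_cons, List.length_append, List.length_replicate]
    omega
  have hmem1 : ∀ A ∈ l1, A ∈ Tod1 d := by
    intro A hA
    simp only [l1, List.mem_append, List.mem_replicate] at hA
    rcases hA with (⟨-, rfl⟩ | ⟨-, rfl⟩) | ⟨-, rfl⟩
    exacts [Aux.Lm_mem, Aux.Um_mem, Aux.one_mem]
  have hmem2 : ∀ A ∈ l2, A ∈ Tod1 d := by
    intro A hA
    simp only [l2, List.mem_cons, List.mem_append, List.mem_replicate] at hA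
    rcases hA with rfl | ((⟨-, rfl⟩ | ⟨-, rfl⟩) | ⟨-, rfl⟩)
    exacts [Aux.neg_Lm_mem, Aux.Lm_mem, Aux.Um_mem, Aux.one_mem]
  have hp1 : l1.prod = Aux.Lm d ^ (n-1) * Aux.Um d ^ (m-1) := by
    simp only [l1, List.prod_append, List.prod_replicate, one_pow, mul_one]
  have hp2 : l2.prod = -(Aux.Lm d ^ n * Aux.Um d ^ m) := by
    have hn' : n - 1 + 1 = n := by omega
    simp only [l2, List.prod_cons, List.prod_append, List.prod_replicate, one_pow, mul_one]
    rw [neg_mul, ← mul_assoc, ← pow_succ', hn']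
  refine ⟨2, ![fun j => l1.get (Fin.cast h1.symm j), fun j => l2.get (Fin.cast h2.symm j)],
    ?_, ?_⟩
  · intro i j
    fin_cases i
    · simp only [Matrix.cons_val_zero]
      exact hmem1 _ (List.get_mem l1 _)
    · simp only [Matrix.cons_val_one, Matrix.head_cons]
      exact hmem2 _ (List.get_mem l2 _)
  · rw [Fin.sum_univ_two]
    simp only [Matrix.cons_val_zero, Matrix.cons_val_one, Matrix.head_cons]
    rw [Aux.ofFn_cast l1 h1, Aux.ofFn_cast l2 h2, hp1, hp2]
    ext i j
    simp only [Matrix.add_apply, Matrix.neg_apply, Aux.LU_pow, matUnit, Matrix.of_apply]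
    have hi := i.isLt
    have hj := j.isLt
    split_ifs
    all_goals try norm_num
    all_goals (exfalso; omega)
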